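/- Lovász Local Lemma (general form): Let A_1,...,A_t be events with dependency graph Γ on vertex set {1,...,t} and edge set E, i.e., each A_i is independent of the collection {A_j : (i,j) ∉ E, j ≠ i}. If there exist reals 0 ≤ z_i < 1 with P(A_i) ≤ z_i ∏_{(i,j)∈E} (1 − z_j) for each i, then P(⋂_i A_i^c) ≥ ∏_{i=1}^t (1 − z_i) > 0. -/

import Mathlib

open MeasureTheory

private lemma lll_indep {Ω : Type*} [MeasurableSpace Ω] {μ : Measure Ω} [IsProbabilityMeasure μ]
    {t : ℕ} {A : Fin t → Set Ω} (hA : ∀ i, MeasurableSet (A i))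
    {E : Fin t → Fin t → Prop}
    (hdep : ∀ i : Fin t, ∀ S : Finset (Fin t),
      (∀ j ∈ S, j ≠ i ∧ ¬ E i j) →
        μ (A i ∩ ⋂ j ∈ S, A j) = μ (A i) * μ (⋂ j ∈ S, A j))
    (i : Fin t) (S : Finset (Fin t)) :
    ∀ T : Finset (Fin t), (∀ j ∈ T, j ≠ i ∧ ¬ E i j) → (∀ j ∈ S, j ≠ i ∧ ¬ E i j) →
      μ (A i ∩ ((⋂ j ∈ T, A j) ∩ ⋂ j ∈ S, (A j)ᶜ))
        = μ (A i) * μ ((⋂ j ∈ T, A j) ∩ ⋂ j ∈ S, (A j)ᶜ) := by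
  induction S using Finset.induction_on with
  | empty =>
    intro T hT _
    simpa using hdep i T hT
  | @insert k S hk ih =>
    intro T hT hS
    have hS' : ∀ j ∈ S, j ≠ i ∧ ¬ E i j := fun j hj => hS j (Finset.mem_insert_of_mem hj)
    have hT' : ∀ j ∈ insert k T, j ≠ i ∧ ¬ E i j := by
      intro j hj
      rcases Finset.mem_insert.1 hj with rfl | hj
      · exact hS j (Finset.mem_insert_self _ _)
      · exact hT j hj
    set X := ⋂ j ∈ T, A j with hX
    set R := ⋂ j ∈ S, (A j)ᶜ with hR
    rw [Finset.set_biInter_insert]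
    have ih1 := ih T hT hS'
    have ih2 := ih (insert k T) hT' hS'
    rw [Finset.set_biInter_insert] at ih2
    have e1 : μ ((A i ∩ (X ∩ R)) ∩ A k) + μ ((A i ∩ (X ∩ R)) \ A k) = μ (A i ∩ (X ∩ R)) :=
      measure_inter_add_diff _ (hA k)
    have e2 : μ ((X ∩ R) ∩ A k) + μ ((X ∩ R) \ A k) = μ (X ∩ R) :=
      measure_inter_add_diff _ (hA k)
    have s1 : (A i ∩ (X ∩ R)) ∩ A k = A i ∩ (A k ∩ X ∩ R) := by
      ext x; simp only [Set.mem_inter_iff]; tauto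
    have s2 : (A i ∩ (X ∩ R)) \ A k = A i ∩ (X ∩ ((A k)ᶜ ∩ R)) := by
      ext x; simp only [Set.mem_inter_iff, Set.mem_diff, Set.mem_compl_iff]; tauto
    have s3 : (X ∩ R) ∩ A k = A k ∩ X ∩ R := by
      ext x; simp only [Set.mem_inter_iff]; tauto
    have s4 : (X ∩ R) \ A k = X ∩ ((A k)ᶜ ∩ R) := by
      ext x; simp only [Set.mem_inter_iff, Set.mem_diff, Set.mem_compl_iff]; tauto
    rw [s1, s2] at e1
    rw [s3, s4] at e2
    rw [ih1, ih2] at e1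
    have e2' : μ (A i) * μ (A k ∩ X ∩ R) + μ (A i) * μ (X ∩ ((A k)ᶜ ∩ R))
        = μ (A i) * μ (X ∩ R) := by rw [← mul_add, e2]
    have hfin : μ (A i) * μ (A k ∩ X ∩ R) ≠ ⊤ :=
      ENNReal.mul_ne_top (measure_ne_top _ _) (measure_ne_top _ _)
    rw [← e2'] at e1
    exact (ENNReal.add_right_inj hfin).1 e1

/-- one-step decomposition -/
private lemma lll_step {Ω : Type*} [MeasurableSpace Ω] {μ : Measure Ω} [IsProbabilityMeasure μ]
    {t : ℕ} {A : Fin t → Set Ω} (hA : ∀ i, MeasurableSet (A i))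
    (k : Fin t) (S : Finset (Fin t)) :
    (μ (A k ∩ ⋂ j ∈ S, (A j)ᶜ)).toReal + (μ (⋂ j ∈ insert k S, (A j)ᶜ)).toReal
      = (μ (⋂ j ∈ S, (A j)ᶜ)).toReal := by
  have e : μ ((⋂ j ∈ S, (A j)ᶜ) ∩ A k) + μ ((⋂ j ∈ S, (A j)ᶜ) \ A k) = μ (⋂ j ∈ S, (A j)ᶜ) :=
    measure_inter_add_diff _ (hA k)
  have s1 : (⋂ j ∈ S, (A j)ᶜ) ∩ A k = A k ∩ ⋂ j ∈ S, (A j)ᶜ := Set.inter_comm _ _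
  have s2 : (⋂ j ∈ S, (A j)ᶜ) \ A k = ⋂ j ∈ insert k S, (A j)ᶜ := by
    rw [Finset.set_biInter_insert]
    ext x; simp only [Set.mem_inter_iff, Set.mem_diff, Set.mem_compl_iff]; tauto
  rw [s1, s2] at e
  rw [← e, ENNReal.toReal_add (measure_ne_top _ _) (measure_ne_top _ _)]

private lemma lll_prod_subset {t : ℕ} {z : Fin t → ℝ} (hz0 : ∀ i, 0 ≤ z i) (hz1 : ∀ i, z i < 1)
    {S T : Finset (Fin t)} (h : S ⊆ T) :
    ∏ j ∈ T, (1 - z j) ≤ ∏ j ∈ S, (1 - z j) := by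
  rw [← Finset.prod_sdiff h]
  have h1 : ∏ j ∈ T \ S, (1 - z j) ≤ 1 :=
    Finset.prod_le_one (fun j _ => by linarith [hz1 j]) (fun j _ => by linarith [hz0 j])
  have h2 : (0:ℝ) ≤ ∏ j ∈ S, (1 - z j) :=
    Finset.prod_nonneg fun j _ => by linarith [hz1 j]
  nlinarith

private lemma lll_key {Ω : Type*} [MeasurableSpace Ω] {μ : Measure Ω} [IsProbabilityMeasure μ]
    {t : ℕ} {A : Fin t → Set Ω} (hA : ∀ i, MeasurableSet (A i))
    {E : Fin t → Fin t → Prop} [DecidableRel E]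
    (hdep : ∀ i : Fin t, ∀ S : Finset (Fin t),
      (∀ j ∈ S, j ≠ i ∧ ¬ E i j) →
        μ (A i ∩ ⋂ j ∈ S, A j) = μ (A i) * μ (⋂ j ∈ S, A j))
    {z : Fin t → ℝ} (hz0 : ∀ i, 0 ≤ z i) (hz1 : ∀ i, z i < 1)
    (hmain : ∀ i, (μ (A i)).toReal ≤
      z i * ∏ j ∈ Finset.univ.filter (fun j => E i j), (1 - z j)) :
    ∀ n : ℕ, ∀ S : Finset (Fin t), S.card = n → ∀ i ∉ S,
      (μ (A i ∩ ⋂ j ∈ S, (A j)ᶜ)).toReal ≤ z i * (μ (⋂ j ∈ S, (A j)ᶜ)).toReal := by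
  intro n
  induction n using Nat.strong_induction_on with
  | _ n IH =>
    intro S hcard i hi
    -- product lower bound for smaller sets
    have hB : ∀ D : Finset (Fin t), ∀ S₂ : Finset (Fin t), D ∪ S₂ ⊆ S → Disjoint D S₂ →
        (∏ j ∈ D, (1 - z j)) * (μ (⋂ j ∈ S₂, (A j)ᶜ)).toReal
          ≤ (μ (⋂ j ∈ D ∪ S₂, (A j)ᶜ)).toReal := by
      intro D
      induction D using Finset.induction_on with
      | empty => intro S₂ _ _; simp
      | @insert k D hk ihD =>
        intro S₂ hsub hdisj
        have hkD : k ∉ D ∪ S₂ := by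
          simp only [Finset.mem_union, not_or]
          exact ⟨hk, Finset.disjoint_left.1 hdisj (Finset.mem_insert_self _ _)⟩
        have hins : insert k D ∪ S₂ = insert k (D ∪ S₂) := Finset.insert_union _ _ _
        have hsub' : insert k (D ∪ S₂) ⊆ S := by rw [← hins]; exact hsub
        have hcard' : (D ∪ S₂).card < n := by
          have h1 : (insert k (D ∪ S₂)).card ≤ S.card := Finset.card_le_card hsub'
          rw [Finset.card_insert_of_notMem hkD] at h1
          omega
        have hkey := IH _ hcard' (D ∪ S₂) rfl k hkD
        have hstep := lll_step (μ := μ) hA k (D ∪ S₂)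
        have ihD' := ihD S₂ (Finset.union_subset_union_left (Finset.subset_insert _ _) |>.trans hsub ) (Finset.disjoint_of_subset_left (Finset.subset_insert _ _) hdisj)
        rw [Finset.prod_insert hk, hins]
        have hz0' : (0:ℝ) ≤ 1 - z k := by linarith [hz1 k]
        have hm : (0:ℝ) ≤ (μ (⋂ j ∈ D ∪ S₂, (A j)ᶜ)).toReal := ENNReal.toReal_nonneg
        nlinarith [hkey, hstep, ihD', mul_le_mul_of_nonneg_left ihD' hz0']
    -- split S
    set S₁ := S.filter (fun j => E i j) with hS₁
    set S₂ := S.filter (fun j => ¬ E i j) with hS₂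
    have hunion : S₁ ∪ S₂ = S := Finset.filter_union_filter_not_eq _ S
    have hdisj : Disjoint S₁ S₂ := Finset.disjoint_filter_filter_not S S _
    have hS₂cond : ∀ j ∈ S₂, j ≠ i ∧ ¬ E i j := by
      intro j hj
      rw [hS₂, Finset.mem_filter] at hj
      exact ⟨fun h => hi (h ▸ hj.1), hj.2⟩
    have hindep := lll_indep hA hdep i S₂ ∅ (by simp) hS₂cond
    simp only [Finset.notMem_empty, Set.iInter_of_empty, Set.iInter_univ, Set.univ_inter] at hindep
    have hmono : μ (A i ∩ ⋂ j ∈ S, (A j)ᶜ) ≤ μ (A i ∩ ⋂ j ∈ S₂, (A j)ᶜ) := by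
      apply measure_mono
      apply Set.inter_subset_inter_right
      intro x hx
      exact Set.mem_iInter₂.2 fun j hj => Set.mem_iInter₂.1 hx j (Finset.filter_subset _ _ hj)
    have hnum : (μ (A i ∩ ⋂ j ∈ S, (A j)ᶜ)).toReal
        ≤ (μ (A i)).toReal * (μ (⋂ j ∈ S₂, (A j)ᶜ)).toReal := by
      calc (μ (A i ∩ ⋂ j ∈ S, (A j)ᶜ)).toReal
          ≤ (μ (A i ∩ ⋂ j ∈ S₂, (A j)ᶜ)).toReal :=
            ENNReal.toReal_mono (measure_ne_top _ _) hmono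
        _ = (μ (A i)).toReal * (μ (⋂ j ∈ S₂, (A j)ᶜ)).toReal := by
            rw [hindep, ENNReal.toReal_mul]
    have hprodmono : ∏ j ∈ Finset.univ.filter (fun j => E i j), (1 - z j)
        ≤ ∏ j ∈ S₁, (1 - z j) := by
      apply lll_prod_subset hz0 hz1
      intro j hj
      rw [hS₁, Finset.mem_filter] at hj
      exact Finset.mem_filter.2 ⟨Finset.mem_univ _, hj.2⟩
    have hBfin := hB S₁ S₂ (by rw [hunion]) hdisj
    rw [hunion] at hBfin
    have hm2 : (0:ℝ) ≤ (μ (⋂ j ∈ S₂, (A j)ᶜ)).toReal := ENNReal.toReal_nonneg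
    calc (μ (A i ∩ ⋂ j ∈ S, (A j)ᶜ)).toReal
        ≤ (μ (A i)).toReal * (μ (⋂ j ∈ S₂, (A j)ᶜ)).toReal := hnum
      _ ≤ (z i * ∏ j ∈ Finset.univ.filter (fun j => E i j), (1 - z j))
            * (μ (⋂ j ∈ S₂, (A j)ᶜ)).toReal :=
          mul_le_mul_of_nonneg_right (hmain i) hm2
      _ ≤ (z i * ∏ j ∈ S₁, (1 - z j)) * (μ (⋂ j ∈ S₂, (A j)ᶜ)).toReal := by
          apply mul_le_mul_of_nonneg_right _ hm2
          exact mul_le_mul_of_nonneg_left hprodmono (hz0 i)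
      _ = z i * ((∏ j ∈ S₁, (1 - z j)) * (μ (⋂ j ∈ S₂, (A j)ᶜ)).toReal) := by ring
      _ ≤ z i * (μ (⋂ j ∈ S, (A j)ᶜ)).toReal :=
          mul_le_mul_of_nonneg_left hBfin (hz0 i)

theorem stmt_1 {Ω : Type*} [MeasurableSpace Ω] (μ : Measure Ω) [IsProbabilityMeasure μ]
    (t : ℕ) (A : Fin t → Set Ω) (hA : ∀ i, MeasurableSet (A i))
    (E : Fin t → Fin t → Prop) [DecidableRel E] (hsymm : ∀ i j, E i j → E j i)
    (hdep : ∀ i : Fin t, ∀ S : Finset (Fin t),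
      (∀ j ∈ S, j ≠ i ∧ ¬ E i j) →
        μ (A i ∩ ⋂ j ∈ S, A j) = μ (A i) * μ (⋂ j ∈ S, A j))
    (z : Fin t → ℝ) (hz0 : ∀ i, 0 ≤ z i) (hz1 : ∀ i, z i < 1)
    (hmain : ∀ i, (μ (A i)).toReal ≤
      z i * ∏ j ∈ Finset.univ.filter (fun j => E i j), (1 - z j)) :
    (μ (⋂ i, (A i)ᶜ)).toReal ≥ ∏ i, (1 - z i) ∧ (0 : ℝ) < ∏ i, (1 - z i) := by
  have hkey := lll_key hA hdep hz0 hz1 hmain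
  have hBall : ∀ S : Finset (Fin t), ∏ j ∈ S, (1 - z j) ≤ (μ (⋂ j ∈ S, (A j)ᶜ)).toReal := by
    intro S
    induction S using Finset.induction_on with
    | empty => simp
    | @insert k S hk ih =>
      have h1 := hkey S.card S rfl k hk
      have h2 := lll_step (μ := μ) hA k S
      rw [Finset.prod_insert hk]
      have hz0' : (0:ℝ) ≤ 1 - z k := by linarith [hz1 k]
      nlinarith [mul_le_mul_of_nonneg_left ih hz0']
  have hprodpos : (0:ℝ) < ∏ i, (1 - z i) :=
    Finset.prod_pos fun i _ => by linarith [hz1 i]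
  refine ⟨?_, hprodpos⟩
  have : (⋂ i, (A i)ᶜ) = ⋂ j ∈ Finset.univ, (A j)ᶜ := by simp
  rw [this]
  exact hBall Finset.univ
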